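/- Let f satisfy the two-sided PL condition with constants μ₁, μ₂ ∈ (0, l], let Φ(x) := max_{y} f(x,y), assume Φ* := inf_{x} Φ(x) > −∞, and define W(x,y) := 2Φ(x) − f(x,y) − Φ*. Let 0 < η_y ≤ 1/(4l) and η_x = η_y·μ₂²/(64l²). Then one step of gradient descent ascent, x' := x − η_x∇_x f(x,y), y' := y + η_y∇_y f(x,y), satisfies W(x',y') ≤ (1 − η_x·μ₁/16)·W(x,y). Consequently the GDA iterates (x_t,y_t) defined by x_{t+1} = x_t − η_x∇_x f(x_t,y_t), y_{t+1} = y_t + η_y∇_y f(x_t,y_t) satisfy W(x_t,y_t) ≤ (1 − η_x·μ₁/16)^t·W(x₀,y₀) for all t ≥ 0. -/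

import Mathlib

open Set Metric InnerProductSpace
open scoped RealInnerProductSpace

noncomputable def gradx {d1 d2 : ℕ}
    (f : EuclideanSpace ℝ (Fin d1) → EuclideanSpace ℝ (Fin d2) → ℝ)
    (x : EuclideanSpace ℝ (Fin d1)) (y : EuclideanSpace ℝ (Fin d2)) :
    EuclideanSpace ℝ (Fin d1) :=
  gradient (fun x' => f x' y) x

noncomputable def grady {d1 d2 : ℕ}
    (f : EuclideanSpace ℝ (Fin d1) → EuclideanSpace ℝ (Fin d2) → ℝ)
    (x : EuclideanSpace ℝ (Fin d1)) (y : EuclideanSpace ℝ (Fin d2)) :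
    EuclideanSpace ℝ (Fin d2) :=
  gradient (fun y' => f x y') y

/-- `f` is differentiable and `l`-smooth: the gradient is `l`-Lipschitz with respect to the
Euclidean norm on the product space (stated in squared form). -/
def IsLSmooth {d1 d2 : ℕ} (l : ℝ)
    (f : EuclideanSpace ℝ (Fin d1) → EuclideanSpace ℝ (Fin d2) → ℝ) : Prop :=
  Differentiable ℝ (fun w : EuclideanSpace ℝ (Fin d1) × EuclideanSpace ℝ (Fin d2) => f w.1 w.2) ∧
  ∀ x₁ x₂ y₁ y₂,
    ‖gradx f x₁ y₁ - gradx f x₂ y₂‖ ^ 2 + ‖grady f x₁ y₁ - grady f x₂ y₂‖ ^ 2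
      ≤ l ^ 2 * (‖x₁ - x₂‖ ^ 2 + ‖y₁ - y₂‖ ^ 2)

/-- `f̂(x, y, z) = f(x, y) + (p/2)‖x − z‖²`. -/
noncomputable def fhat {d1 d2 : ℕ}
    (f : EuclideanSpace ℝ (Fin d1) → EuclideanSpace ℝ (Fin d2) → ℝ) (p : ℝ)
    (x : EuclideanSpace ℝ (Fin d1)) (y : EuclideanSpace ℝ (Fin d2))
    (z : EuclideanSpace ℝ (Fin d1)) : ℝ :=
  f x y + p / 2 * ‖x - z‖ ^ 2


section aux
variable {d1 d2 : ℕ}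
local notation "E" => EuclideanSpace ℝ (Fin d1)
local notation "F" => EuclideanSpace ℝ (Fin d2)

lemma aux_line (f : E → F → ℝ) (hf : Differentiable ℝ (fun w : E × F => f w.1 w.2))
    (x u : E) (y v : F) (t : ℝ) :
    HasDerivAt (fun t : ℝ => f (x + t • u) (y + t • v))
      (⟪gradx f (x + t • u) (y + t • v), u⟫ + ⟪grady f (x + t • u) (y + t • v), v⟫) t := by
  set w : E × F := (x + t • u, y + t • v) with hw
  set L := fderiv ℝ (fun w : E × F => f w.1 w.2) w with hL
  have hγ : HasDerivAt (fun t : ℝ => ((x + t • u, y + t • v) : E × F)) (u, v) t := by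
    have h1 : HasDerivAt (fun t : ℝ => x + t • u) u t := by
      simpa using ((hasDerivAt_id t).smul_const u).const_add x
    have h2 : HasDerivAt (fun t : ℝ => y + t • v) v t := by
      simpa using ((hasDerivAt_id t).smul_const v).const_add y
    exact h1.prodMk h2
  have hFd : HasFDerivAt (fun w : E × F => f w.1 w.2) L w := (hf w).hasFDerivAt
  have hcomp : HasDerivAt (fun t : ℝ => f (x + t • u) (y + t • v)) (L (u, v)) t :=
    hFd.comp_hasDerivAt (f := fun t : ℝ => ((x + t • u, y + t • v) : E × F)) t hγ
  have hsplit : L (u, v) = L (u, 0) + L (0, v) := by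
    rw [← map_add]; norm_num
  have hx1 : HasFDerivAt (fun x' : E => f x' w.2)
      (L.comp (ContinuousLinearMap.inl ℝ E F)) w.1 :=
    hFd.comp (f := fun e : E => (e, w.2)) w.1 (hasFDerivAt_prodMk_left w.1 w.2)
  have hy1 : HasFDerivAt (fun y' : F => f w.1 y')
      (L.comp (ContinuousLinearMap.inr ℝ E F)) w.2 :=
    hFd.comp w.2 (hasFDerivAt_prodMk_right w.1 w.2)
  have hgx : gradx f w.1 w.2 = (toDual ℝ E).symm (L.comp (ContinuousLinearMap.inl ℝ E F)) :=
    (hasFDerivAt_iff_hasGradientAt.mp hx1).gradient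
  have hgy : grady f w.1 w.2 = (toDual ℝ F).symm (L.comp (ContinuousLinearMap.inr ℝ E F)) :=
    (hasFDerivAt_iff_hasGradientAt.mp hy1).gradient
  have e1 : ⟪gradx f w.1 w.2, u⟫ = L (u, 0) := by
    rw [hgx, toDual_symm_apply]; rfl
  have e2 : ⟪grady f w.1 w.2, v⟫ = L (0, v) := by
    rw [hgy, toDual_symm_apply]; rfl
  have key : ⟪gradx f w.1 w.2, u⟫ + ⟪grady f w.1 w.2, v⟫ = L (u, v) := by
    rw [e1, e2, hsplit]
  rw [hw] at key
  simp only [] at key ⊢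
  rw [key]
  exact hcomp

lemma aux_mono (g g' : ℝ → ℝ) (hg : ∀ t, HasDerivAt g (g' t) t)
    (hg' : ∀ t ∈ Ioo (0:ℝ) 1, g' t ≤ 0) : g 1 ≤ g 0 := by
  have hdiff : Differentiable ℝ g := fun t => (hg t).differentiableAt
  refine antitoneOn_of_deriv_nonpos (convex_Icc (0:ℝ) 1)
    (hdiff.continuous.continuousOn) (hdiff.differentiableOn) ?_
    (left_mem_Icc.mpr zero_le_one) (right_mem_Icc.mpr zero_le_one) zero_le_one
  intro t ht
  rw [interior_Icc] at ht
  rw [(hg t).deriv]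
  exact hg' t ht

lemma aux_taylor {l : ℝ} (hl : 0 ≤ l) (f : E → F → ℝ) (hf : IsLSmooth l f)
    (x u : E) (y v : F) :
    |f (x + u) (y + v) - f x y - ⟪gradx f x y, u⟫ - ⟪grady f x y, v⟫|
      ≤ l / 2 * (‖u‖ ^ 2 + ‖v‖ ^ 2) := by
  obtain ⟨hdiff, hlip⟩ := hf
  set s2 := ‖u‖ ^ 2 + ‖v‖ ^ 2 with hs2
  have hs2nn : 0 ≤ s2 := by positivity
  set φ : ℝ → ℝ := fun t => f (x + t • u) (y + t • v) with hφ
  set φ' : ℝ → ℝ := fun t =>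
    ⟪gradx f (x + t • u) (y + t • v), u⟫ + ⟪grady f (x + t • u) (y + t • v), v⟫ with hφ'
  have hder : ∀ t, HasDerivAt φ (φ' t) t := fun t => aux_line f hdiff x u y v t
  have hkey : ∀ t ∈ Ioo (0:ℝ) 1, |φ' t - φ' 0| ≤ l * t * s2 := by
    intro t ht
    set A := ‖gradx f (x + t • u) (y + t • v) - gradx f (x + (0:ℝ) • u) (y + (0:ℝ) • v)‖ with hA
    set B := ‖grady f (x + t • u) (y + t • v) - grady f (x + (0:ℝ) • u) (y + (0:ℝ) • v)‖ with hB
    have hAnn : 0 ≤ A := norm_nonneg _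
    have hBnn : 0 ≤ B := norm_nonneg _
    have hsub : φ' t - φ' 0 =
        ⟪gradx f (x + t • u) (y + t • v) - gradx f (x + (0:ℝ) • u) (y + (0:ℝ) • v), u⟫
        + ⟪grady f (x + t • u) (y + t • v) - grady f (x + (0:ℝ) • u) (y + (0:ℝ) • v), v⟫ := by
      simp only [hφ', inner_sub_left]; ring
    have cs1 := abs_real_inner_le_norm
      (gradx f (x + t • u) (y + t • v) - gradx f (x + (0:ℝ) • u) (y + (0:ℝ) • v)) u
    have cs2 := abs_real_inner_le_norm
      (grady f (x + t • u) (y + t • v) - grady f (x + (0:ℝ) • u) (y + (0:ℝ) • v)) v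
    have hlipt := hlip (x + t • u) (x + (0:ℝ) • u) (y + t • v) (y + (0:ℝ) • v)
    have hn1 : ‖(x + t • u) - (x + (0:ℝ) • u)‖ = t * ‖u‖ := by
      rw [show (x + t • u) - (x + (0:ℝ) • u) = t • u by module]
      rw [norm_smul]; simp [abs_of_pos ht.1]
    have hn2 : ‖(y + t • v) - (y + (0:ℝ) • v)‖ = t * ‖v‖ := by
      rw [show (y + t • v) - (y + (0:ℝ) • v) = t • v by module]
      rw [norm_smul]; simp [abs_of_pos ht.1]
    rw [hn1, hn2] at hlipt
    have habs : |φ' t - φ' 0| ≤ A * ‖u‖ + B * ‖v‖ := by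
      rw [hsub]
      calc |_ + _| ≤ |⟪_, u⟫| + |⟪_, v⟫| := abs_add_le _ _
        _ ≤ A * ‖u‖ + B * ‖v‖ := add_le_add cs1 cs2
    have hsq : (A * ‖u‖ + B * ‖v‖) ^ 2 ≤ (l * t * s2) ^ 2 := by
      have h1 : (A * ‖u‖ + B * ‖v‖) ^ 2 ≤ (A ^ 2 + B ^ 2) * s2 := by
        rw [hs2]; nlinarith [sq_nonneg (A * ‖v‖ - B * ‖u‖)]
      calc (A * ‖u‖ + B * ‖v‖) ^ 2 ≤ (A ^ 2 + B ^ 2) * s2 := h1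
        _ ≤ l ^ 2 * ((t * ‖u‖) ^ 2 + (t * ‖v‖) ^ 2) * s2 := by
            apply mul_le_mul_of_nonneg_right hlipt hs2nn
        _ = (l * t * s2) ^ 2 := by rw [hs2]; ring_nf
    have hrhs : 0 ≤ l * t * s2 := mul_nonneg (mul_nonneg hl ht.1.le) hs2nn
    have hlhs : 0 ≤ A * ‖u‖ + B * ‖v‖ := add_nonneg (mul_nonneg hAnn (norm_nonneg u)) (mul_nonneg hBnn (norm_nonneg v))
    have : A * ‖u‖ + B * ‖v‖ ≤ l * t * s2 := by nlinarith
    linarith [habs]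
  have hφ1 : φ 1 = f (x + u) (y + v) := by simp [hφ]
  have hφ0 : φ 0 = f x y := by simp [hφ]
  have hφ'0 : φ' 0 = ⟪gradx f x y, u⟫ + ⟪grady f x y, v⟫ := by simp [hφ']
  clear_value s2 φ φ'
  clear hφ hφ' hlip
  have g1 : φ 1 - 1 * φ' 0 - l / 2 * s2 * 1 ^ 2 ≤ φ 0 - 0 * φ' 0 - l / 2 * s2 * 0 ^ 2 := by
    apply aux_mono (fun t => φ t - t * φ' 0 - l / 2 * s2 * t ^ 2)
      (fun t => φ' t - φ' 0 - l / 2 * s2 * (2 * t))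
    · intro t
      have h := ((hder t).sub ((hasDerivAt_id t).mul_const (φ' 0))).sub
        ((hasDerivAt_pow 2 t).const_mul (l / 2 * s2))
      exact h.congr_deriv (by norm_num)
    · intro t ht
      have h2 : φ' t - φ' 0 ≤ l * t * s2 := (abs_le.mp (hkey t ht)).2
      have h3 : l / 2 * s2 * (2 * t) = l * t * s2 := by ring
      linarith
  have g2 : -φ 1 + 1 * φ' 0 - l / 2 * s2 * 1 ^ 2 ≤ -φ 0 + 0 * φ' 0 - l / 2 * s2 * 0 ^ 2 := by
    apply aux_mono (fun t => -φ t + t * φ' 0 - l / 2 * s2 * t ^ 2)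
      (fun t => -φ' t + φ' 0 - l / 2 * s2 * (2 * t))
    · intro t
      have h := (((hder t).neg).add ((hasDerivAt_id t).mul_const (φ' 0))).sub
        ((hasDerivAt_pow 2 t).const_mul (l / 2 * s2))
      exact h.congr_deriv (by norm_num)
    · intro t ht
      have h2 : -(l * t * s2) ≤ φ' t - φ' 0 := (abs_le.mp (hkey t ht)).1
      have h3 : l / 2 * s2 * (2 * t) = l * t * s2 := by ring
      linarith
  rw [hφ1, hφ0, hφ'0] at g1 g2
  rw [abs_le]
  constructor
  · simp only [one_mul, zero_mul, one_pow, zero_pow] at g2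
    linarith [g2]
  · simp only [one_mul, zero_mul, one_pow, zero_pow] at g1
    linarith [g1]

lemma aux_ub {l : ℝ} (hl : 0 ≤ l) (f : E → F → ℝ) (hf : IsLSmooth l f)
    (x u : E) (y v : F) :
    f (x + u) (y + v) ≤ f x y + ⟪gradx f x y, u⟫ + ⟪grady f x y, v⟫
      + l / 2 * (‖u‖ ^ 2 + ‖v‖ ^ 2) := by
  have := (abs_le.mp (aux_taylor hl f hf x u y v)).2
  linarith

lemma aux_lb {l : ℝ} (hl : 0 ≤ l) (f : E → F → ℝ) (hf : IsLSmooth l f)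
    (x u : E) (y v : F) :
    f x y + ⟪gradx f x y, u⟫ + ⟪grady f x y, v⟫ - l / 2 * (‖u‖ ^ 2 + ‖v‖ ^ 2)
      ≤ f (x + u) (y + v) := by
  have := (abs_le.mp (aux_taylor hl f hf x u y v)).1
  linarith

lemma aux_ub_x {l : ℝ} (hl : 0 ≤ l) (f : E → F → ℝ) (hf : IsLSmooth l f)
    (x u : E) (y : F) :
    f (x + u) y ≤ f x y + ⟪gradx f x y, u⟫ + l / 2 * ‖u‖ ^ 2 := by
  have h := aux_ub hl f hf x u y 0
  simpa using h

lemma aux_lb_x {l : ℝ} (hl : 0 ≤ l) (f : E → F → ℝ) (hf : IsLSmooth l f)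
    (x u : E) (y : F) :
    f x y + ⟪gradx f x y, u⟫ - l / 2 * ‖u‖ ^ 2 ≤ f (x + u) y := by
  have h := aux_lb hl f hf x u y 0
  simpa using h

lemma aux_lb_y {l : ℝ} (hl : 0 ≤ l) (f : E → F → ℝ) (hf : IsLSmooth l f)
    (x : E) (y : F) (v : F) :
    f x y + ⟪grady f x y, v⟫ - l / 2 * ‖v‖ ^ 2 ≤ f x (y + v) := by
  have h := aux_lb hl f hf x 0 y v
  simpa using h

/-- gradient upper bound via gap to max: `‖∇_y f(x,y)‖² ≤ 2l(Φ(x) − f(x,y))`. -/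
lemma aux_gub {l : ℝ} (hl : 0 < l) (f : E → F → ℝ) (hf : IsLSmooth l f)
    (ymax : E → F) (hymax : ∀ x y, f x y ≤ f x (ymax x)) (x : E) (y : F) :
    ‖grady f x y‖ ^ 2 ≤ 2 * l * (f x (ymax x) - f x y) := by
  have h := aux_lb_y hl.le f hf x y ((1 / l) • grady f x y)
  rw [real_inner_smul_right, real_inner_self_eq_norm_sq, norm_smul] at h
  have h2 := hymax x (y + (1 / l) • grady f x y)
  have hn : ‖(1:ℝ) / l‖ = 1 / l := by
    rw [Real.norm_eq_abs, abs_of_pos (by positivity)]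
  rw [hn] at h
  have hgg : (0:ℝ) ≤ ‖grady f x y‖ ^ 2 := sq_nonneg _
  have hll : l ≠ 0 := ne_of_gt hl
  have key : f x y + ‖grady f x y‖ ^ 2 / (2 * l) ≤ f x (ymax x) := by
    have e : 1 / l * ‖grady f x y‖ ^ 2 - l / 2 * (1 / l * ‖grady f x y‖) ^ 2
        = ‖grady f x y‖ ^ 2 / (2 * l) := by field_simp; ring
    nlinarith [h, h2]
  have h2l : 0 < 2 * l := by positivity
  calc ‖grady f x y‖ ^ 2 = ‖grady f x y‖ ^ 2 / (2 * l) * (2 * l) := by field_simp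
    _ ≤ (f x (ymax x) - f x y) * (2 * l) := by
        apply mul_le_mul_of_nonneg_right _ h2l.le
        linarith
    _ = 2 * l * (f x (ymax x) - f x y) := by ring

/-- Lipschitz bound for the partial gradients, additively split. -/
lemma aux_lipx {l : ℝ} (hl : 0 ≤ l) (f : E → F → ℝ) (hf : IsLSmooth l f)
    (x₁ x₂ : E) (y₁ y₂ : F) :
    ‖gradx f x₁ y₁ - gradx f x₂ y₂‖ ≤ l * ‖x₁ - x₂‖ + l * ‖y₁ - y₂‖ := by
  have h := hf.2 x₁ x₂ y₁ y₂
  have h2 : ‖gradx f x₁ y₁ - gradx f x₂ y₂‖ ^ 2 ≤ (l * ‖x₁ - x₂‖ + l * ‖y₁ - y₂‖) ^ 2 := by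
    nlinarith [sq_nonneg (‖grady f x₁ y₁ - grady f x₂ y₂‖),
      mul_nonneg (mul_nonneg (mul_nonneg hl hl) (norm_nonneg (x₁ - x₂))) (norm_nonneg (y₁ - y₂))]
  have h3 : (0:ℝ) ≤ l * ‖x₁ - x₂‖ + l * ‖y₁ - y₂‖ :=
    add_nonneg (mul_nonneg hl (norm_nonneg _)) (mul_nonneg hl (norm_nonneg _))
  nlinarith [norm_nonneg (gradx f x₁ y₁ - gradx f x₂ y₂)]

lemma aux_lipy {l : ℝ} (hl : 0 ≤ l) (f : E → F → ℝ) (hf : IsLSmooth l f)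
    (x₁ x₂ : E) (y₁ y₂ : F) :
    ‖grady f x₁ y₁ - grady f x₂ y₂‖ ≤ l * ‖x₁ - x₂‖ + l * ‖y₁ - y₂‖ := by
  have h := hf.2 x₁ x₂ y₁ y₂
  have h2 : ‖grady f x₁ y₁ - grady f x₂ y₂‖ ^ 2 ≤ (l * ‖x₁ - x₂‖ + l * ‖y₁ - y₂‖) ^ 2 := by
    nlinarith [sq_nonneg (‖gradx f x₁ y₁ - gradx f x₂ y₂‖),
      mul_nonneg (mul_nonneg (mul_nonneg hl hl) (norm_nonneg (x₁ - x₂))) (norm_nonneg (y₁ - y₂))]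
  have h3 : (0:ℝ) ≤ l * ‖x₁ - x₂‖ + l * ‖y₁ - y₂‖ :=
    add_nonneg (mul_nonneg hl (norm_nonneg _)) (mul_nonneg hl (norm_nonneg _))
  nlinarith [norm_nonneg (grady f x₁ y₁ - grady f x₂ y₂)]

set_option maxHeartbeats 1000000 in
/-- PL implies existence of a nearby maximizer (quadratic-growth type bound), via the
gradient-ascent path. -/
lemma aux_qg {l μ₂ : ℝ} (hl : 0 < l) (hμ₂ : 0 < μ₂) (hμ₂l : μ₂ ≤ l)
    (f : E → F → ℝ) (hf : IsLSmooth l f)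
    (ymax : E → F) (hymax : ∀ x y, f x y ≤ f x (ymax x))
    (hPLy : ∀ x y, 2 * μ₂ * (f x (ymax x) - f x y) ≤ ‖grady f x y‖ ^ 2)
    (x : E) (y : F) :
    ∃ yh : F, (∀ z, f x z ≤ f x yh) ∧
      μ₂ * ‖y - yh‖ ^ 2 ≤ (8 / 3) * (f x (ymax x) - f x y) := by
  obtain ⟨γ, hγ⟩ : ∃ γ : ℝ, γ = 1 / (4 * l) := ⟨_, rfl⟩
  have hγpos : 0 < γ := by rw [hγ]; positivity
  have hlγ : l * γ = 1 / 4 := by rw [hγ]; field_simp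
  obtain ⟨M, hM⟩ : ∃ M : ℝ, M = f x (ymax x) := ⟨_, rfl⟩
  obtain ⟨Y, hY0, hYs⟩ : ∃ Y : ℕ → F, Y 0 = y ∧
      ∀ n, Y (n + 1) = Y n + γ • grady f x (Y n) :=
    ⟨fun n => Nat.rec y (fun _ p => p + γ • grady f x p) n, rfl, fun n => rfl⟩
  obtain ⟨Δ, hΔ⟩ : ∃ Δ : ℕ → ℝ, ∀ n, Δ n = M - f x (Y n) := ⟨_, fun _ => rfl⟩
  have hΔnn : ∀ n, 0 ≤ Δ n := fun n => by
    rw [hΔ, hM]; linarith [hymax x (Y n)]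
  have hdec : ∀ n, Δ (n + 1) ≤ Δ n - 7 / 8 * γ * ‖grady f x (Y n)‖ ^ 2 := by
    intro n
    have h := aux_lb_y hl.le f hf x (Y n) (γ • grady f x (Y n))
    rw [real_inner_smul_right, real_inner_self_eq_norm_sq, norm_smul,
      Real.norm_eq_abs, abs_of_pos hγpos] at h
    have h2 : l / 2 * (γ * ‖grady f x (Y n)‖) ^ 2
        = 1 / 8 * (γ * ‖grady f x (Y n)‖ ^ 2) := by
      have e : l / 2 * (γ * ‖grady f x (Y n)‖) ^ 2
          = l * γ / 2 * (γ * ‖grady f x (Y n)‖ ^ 2) := by ring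
      rw [e, hlγ]; ring
    rw [hΔ (n + 1), hΔ n, hYs n, hM]
    rw [h2] at h
    linarith
  have hmono : ∀ n, Δ (n + 1) ≤ Δ n := by
    intro n
    have h := hdec n
    nlinarith [mul_nonneg hγpos.le (sq_nonneg ‖grady f x (Y n)‖)]
  obtain ⟨q, hq⟩ : ∃ q : ℝ, q = 1 - 7 / 4 * (μ₂ * γ) := ⟨_, rfl⟩
  have hμγ : μ₂ * γ ≤ 1 / 4 := by
    rw [hγ]
    rw [mul_one_div, div_le_div_iff₀ (by positivity) (by norm_num)]
    nlinarith
  have hμγ0 : 0 < μ₂ * γ := mul_pos hμ₂ hγpos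
  have hq0 : 0 < q := by rw [hq]; linarith
  have hq1 : q < 1 := by rw [hq]; linarith
  have hgeom : ∀ n, Δ (n + 1) ≤ q * Δ n := by
    intro n
    have h1 := hdec n
    have h2 : 2 * μ₂ * Δ n ≤ ‖grady f x (Y n)‖ ^ 2 := by
      rw [hΔ n, hM]; exact hPLy x (Y n)
    have h3 : 7 / 8 * γ * (2 * μ₂ * Δ n) ≤ 7 / 8 * γ * ‖grady f x (Y n)‖ ^ 2 :=
      mul_le_mul_of_nonneg_left h2 (by positivity)
    rw [hq]; nlinarith
  have hΔle : ∀ n, Δ n ≤ q ^ n * Δ 0 := by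
    intro n
    induction n with
    | zero => simp
    | succ n ih =>
      calc Δ (n + 1) ≤ q * Δ n := hgeom n
        _ ≤ q * (q ^ n * Δ 0) := mul_le_mul_of_nonneg_left ih hq0.le
        _ = q ^ (n + 1) * Δ 0 := by ring
  have hgub : ∀ n, ‖grady f x (Y n)‖ ^ 2 ≤ 2 * l * Δ n := fun n => by
    rw [hΔ n, hM]; exact aux_gub hl f hf ymax hymax x (Y n)
  obtain ⟨r, hr⟩ : ∃ r : ℝ, r = Real.sqrt q := ⟨_, rfl⟩
  have hr0 : 0 ≤ r := hr ▸ Real.sqrt_nonneg q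
  have hr1 : r < 1 := by rw [hr]; exact (Real.sqrt_lt hq0.le zero_le_one).mpr (by nlinarith)
  have hr2 : r ^ 2 = q := by rw [hr]; exact Real.sq_sqrt hq0.le
  obtain ⟨C, hC⟩ : ∃ C : ℝ, C = γ * Real.sqrt (2 * l * Δ 0) := ⟨_, rfl⟩
  have hC0 : 0 ≤ C := hC ▸ mul_nonneg hγpos.le (Real.sqrt_nonneg _)
  have hstep : ∀ n, dist (Y n) (Y (n + 1)) = γ * ‖grady f x (Y n)‖ := by
    intro n
    rw [dist_eq_norm, hYs n]
    rw [show Y n - (Y n + γ • grady f x (Y n)) = -(γ • grady f x (Y n)) by abel]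
    rw [norm_neg, norm_smul, Real.norm_eq_abs, abs_of_pos hγpos]
  have hgeomdist : ∀ n, dist (Y n) (Y (n + 1)) ≤ C * r ^ n := by
    intro n
    rw [hstep n]
    have h3 : Real.sqrt (2 * l * Δ 0) ^ 2 = 2 * l * Δ 0 :=
      Real.sq_sqrt (mul_nonneg (by positivity) (hΔnn 0))
    have h1 : (γ * ‖grady f x (Y n)‖) ^ 2 ≤ (C * r ^ n) ^ 2 := by
      have e1 : (C * r ^ n) ^ 2 = γ ^ 2 * (2 * l * Δ 0) * q ^ n := by
        calc (C * r ^ n) ^ 2 = γ ^ 2 * Real.sqrt (2 * l * Δ 0) ^ 2 * (r ^ 2) ^ n := by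
              rw [hC]; ring
          _ = γ ^ 2 * (2 * l * Δ 0) * q ^ n := by rw [hr2, h3]
      rw [e1]
      calc (γ * ‖grady f x (Y n)‖) ^ 2 = γ ^ 2 * ‖grady f x (Y n)‖ ^ 2 := by ring
        _ ≤ γ ^ 2 * (2 * l * Δ n) := mul_le_mul_of_nonneg_left (hgub n) (sq_nonneg γ)
        _ ≤ γ ^ 2 * (2 * l * (q ^ n * Δ 0)) := by
            apply mul_le_mul_of_nonneg_left _ (sq_nonneg γ)
            exact mul_le_mul_of_nonneg_left (hΔle n) (by positivity)
        _ = γ ^ 2 * (2 * l * Δ 0) * q ^ n := by ring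
    nlinarith [mul_nonneg hγpos.le (norm_nonneg (grady f x (Y n))),
      mul_nonneg hC0 (pow_nonneg hr0 n)]
  have hcauchy : CauchySeq Y := cauchySeq_of_le_geometric r C hr1 hgeomdist
  obtain ⟨yh, hyh⟩ := cauchySeq_tendsto_of_complete hcauchy
  have hContPartial : Continuous (fun y' : F => f x y') := by
    have e : (fun y' : F => f x y') = (fun w : E × F => f w.1 w.2) ∘ (fun y' : F => (x, y')) := rfl
    rw [e]
    exact hf.1.continuous.comp (continuous_const.prodMk continuous_id)
  have hΔ0' : Filter.Tendsto Δ Filter.atTop (nhds 0) := by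
    apply squeeze_zero hΔnn hΔle
    have h := tendsto_pow_atTop_nhds_zero_of_lt_one hq0.le hq1
    simpa using h.mul_const (Δ 0)
  have hfy : Filter.Tendsto (fun n => f x (Y n)) Filter.atTop (nhds M) := by
    have e : (fun n => f x (Y n)) = fun n => M - Δ n := by
      funext n; rw [hΔ n]; ring
    rw [e]
    simpa using tendsto_const_nhds.sub hΔ0'
  have hfyh : f x yh = M := by
    have h2 : Filter.Tendsto (fun n => f x (Y n)) Filter.atTop (nhds (f x yh)) :=
      (hContPartial.tendsto yh).comp hyh
    exact tendsto_nhds_unique h2 hfy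
  refine ⟨yh, fun z => by rw [hfyh, hM]; exact hymax x z, ?_⟩
  -- the distance estimate via √Δ telescoping
  obtain ⟨s, hs⟩ : ∃ s : ℕ → ℝ, ∀ n, s n = Real.sqrt (Δ n) := ⟨_, fun _ => rfl⟩
  have hsnn : ∀ n, 0 ≤ s n := fun n => (hs n) ▸ Real.sqrt_nonneg _
  have hssq : ∀ n, s n ^ 2 = Δ n := fun n => by rw [hs n]; exact Real.sq_sqrt (hΔnn n)
  have hsmono : ∀ n, s (n + 1) ≤ s n := fun n => by
    rw [hs n, hs (n + 1)]; exact Real.sqrt_le_sqrt (hmono n)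
  obtain ⟨K, hK⟩ : ∃ K : ℝ, K = 16 / 7 / Real.sqrt (2 * μ₂) := ⟨_, rfl⟩
  have h2μ : (0:ℝ) < Real.sqrt (2 * μ₂) := Real.sqrt_pos.mpr (by positivity)
  have hK0 : 0 ≤ K := by rw [hK]; positivity
  have hstepK : ∀ n, dist (Y n) (Y (n + 1)) ≤ K * (s n - s (n + 1)) := by
    intro n
    rw [hstep n]
    rcases eq_or_lt_of_le (norm_nonneg (grady f x (Y n))) with hg0 | hgpos
    · rw [← hg0, mul_zero]
      exact mul_nonneg hK0 (by linarith [hsmono n])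
    · have hΔpos : 0 < Δ n := by
        by_contra hc
        push_neg at hc
        have h0 : Δ n = 0 := le_antisymm hc (hΔnn n)
        have h1 := hgub n
        rw [h0] at h1
        nlinarith
      have hspos : 0 < s n := by
        rw [hs n]; exact Real.sqrt_pos.mpr hΔpos
      have hkey : 7 / 8 * γ * ‖grady f x (Y n)‖ ^ 2 ≤ 2 * s n * (s n - s (n + 1)) := by
        have h1 := hdec n
        have h2 : Δ n - Δ (n + 1) = (s n - s (n + 1)) * (s n + s (n + 1)) := by
          rw [show (s n - s (n + 1)) * (s n + s (n + 1)) = s n ^ 2 - s (n + 1) ^ 2 by ring,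
            hssq, hssq]
        nlinarith [hsmono n, hsnn (n + 1), hsnn n, sq_nonneg (s n - s (n + 1))]
      have hglb : Real.sqrt (2 * μ₂) * s n ≤ ‖grady f x (Y n)‖ := by
        have h1 : (Real.sqrt (2 * μ₂) * s n) ^ 2 = 2 * μ₂ * Δ n := by
          rw [mul_pow, Real.sq_sqrt (by positivity : (0:ℝ) ≤ 2 * μ₂), hssq]
        have h2 : 2 * μ₂ * Δ n ≤ ‖grady f x (Y n)‖ ^ 2 := by
          rw [hΔ n, hM]; exact hPLy x (Y n)
        nlinarith [mul_nonneg h2μ.le (hsnn n), norm_nonneg (grady f x (Y n))]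
      have hcomb : γ * ‖grady f x (Y n)‖ * (Real.sqrt (2 * μ₂) * s n)
          ≤ 16 / 7 * (s n * (s n - s (n + 1))) := by
        calc γ * ‖grady f x (Y n)‖ * (Real.sqrt (2 * μ₂) * s n)
            ≤ γ * ‖grady f x (Y n)‖ * ‖grady f x (Y n)‖ := by
              apply mul_le_mul_of_nonneg_left hglb
              exact mul_nonneg hγpos.le (norm_nonneg _)
          _ = 8 / 7 * (7 / 8 * γ * ‖grady f x (Y n)‖ ^ 2) := by ring
          _ ≤ 8 / 7 * (2 * s n * (s n - s (n + 1))) := by linarith [hkey]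
          _ = 16 / 7 * (s n * (s n - s (n + 1))) := by ring
      have hdiv : γ * ‖grady f x (Y n)‖ * Real.sqrt (2 * μ₂) ≤ 16 / 7 * (s n - s (n + 1)) := by
        have h5 := hcomb
        rw [show γ * ‖grady f x (Y n)‖ * (Real.sqrt (2 * μ₂) * s n)
            = γ * ‖grady f x (Y n)‖ * Real.sqrt (2 * μ₂) * s n by ring,
          show (16:ℝ) / 7 * (s n * (s n - s (n + 1))) = 16 / 7 * (s n - s (n + 1)) * s n by ring]
          at h5
        exact le_of_mul_le_mul_right h5 hspos
      rw [hK, div_mul_eq_mul_div, le_div_iff₀ h2μ]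
      linarith [hdiv]
  have htel : ∀ n, dist (Y 0) (Y n) ≤ K * (s 0 - s n) := by
    intro n
    induction n with
    | zero => simp
    | succ n ih =>
      calc dist (Y 0) (Y (n + 1)) ≤ dist (Y 0) (Y n) + dist (Y n) (Y (n + 1)) :=
            dist_triangle _ _ _
        _ ≤ K * (s 0 - s n) + K * (s n - s (n + 1)) := add_le_add ih (hstepK n)
        _ = K * (s 0 - s (n + 1)) := by ring
  have hbound : ∀ n, dist (Y 0) (Y n) ≤ K * s 0 := by
    intro n
    calc dist (Y 0) (Y n) ≤ K * (s 0 - s n) := htel n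
      _ ≤ K * s 0 := by nlinarith [hsnn n, hK0]
  have hlim : dist (Y 0) yh ≤ K * s 0 := by
    have h1 : Filter.Tendsto (fun n => dist (Y 0) (Y n)) Filter.atTop
        (nhds (dist (Y 0) yh)) :=
      (continuous_const.dist continuous_id).continuousAt.tendsto.comp hyh
    exact le_of_tendsto h1 (Filter.Eventually.of_forall hbound)
  have hyY0 : ‖y - yh‖ = dist (Y 0) yh := by rw [hY0, dist_eq_norm]
  have hKsq : K ^ 2 = (16 / 7) ^ 2 / (2 * μ₂) := by
    rw [hK, div_pow, Real.sq_sqrt (by positivity : (0:ℝ) ≤ 2 * μ₂)]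
  have hKs : (K * s 0) ^ 2 = 256 / 49 * (Δ 0 / (2 * μ₂)) := by
    rw [mul_pow, hKsq, hssq]
    ring
  have hfin : ‖y - yh‖ ^ 2 ≤ 256 / 49 * (Δ 0 / (2 * μ₂)) := by
    rw [← hKs, hyY0]
    have h0 : 0 ≤ dist (Y 0) yh := dist_nonneg
    have h1 : 0 ≤ K * s 0 := mul_nonneg hK0 (hsnn 0)
    nlinarith
  have hΔ00 : Δ 0 = f x (ymax x) - f x y := by rw [hΔ 0, hM, hY0]
  rw [← hΔ00]
  calc μ₂ * ‖y - yh‖ ^ 2 ≤ μ₂ * (256 / 49 * (Δ 0 / (2 * μ₂))) :=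
        mul_le_mul_of_nonneg_left hfin hμ₂.le
    _ = 128 / 49 * Δ 0 := by field_simp; ring
    _ ≤ 8 / 3 * Δ 0 := by nlinarith [hΔnn 0]

lemma aux_quad {u c : ℝ} (hu : 0 ≤ u) (hc : 0 ≤ c)
    (h : u ^ 2 ≤ 8 / 3 * c * u + 8 / 3 * c ^ 2) : u ≤ 4 * c := by
  nlinarith [mul_nonneg hc hu, sq_nonneg c]

set_option maxHeartbeats 1000000 in
/-- One-step contraction of the Lyapunov function under GDA. -/
lemma aux_onestep {l μ₁ μ₂ ηx ηy : ℝ} (hl : 0 < l)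
    (hμ₁ : 0 < μ₁) (hμ₁l : μ₁ ≤ l) (hμ₂ : 0 < μ₂) (hμ₂l : μ₂ ≤ l)
    (f : E → F → ℝ) (hf : IsLSmooth l f)
    (xmin : F → E) (hxmin : ∀ y x, f (xmin y) y ≤ f x y)
    (ymax : E → F) (hymax : ∀ x y, f x y ≤ f x (ymax x))
    (hPLx : ∀ x y, 2 * μ₁ * (f x y - f (xmin y) y) ≤ ‖gradx f x y‖ ^ 2)
    (hPLy : ∀ x y, 2 * μ₂ * (f x (ymax x) - f x y) ≤ ‖grady f x y‖ ^ 2)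
    (Φstar : ℝ) (hΦstar : IsGLB (Set.range fun x => f x (ymax x)) Φstar)
    (hηy : 0 < ηy) (hηy' : ηy ≤ 1 / (4 * l)) (hηx : ηx = ηy * μ₂ ^ 2 / (64 * l ^ 2))
    (x : E) (y : F) :
    2 * f (x - ηx • gradx f x y) (ymax (x - ηx • gradx f x y))
        - f (x - ηx • gradx f x y) (y + ηy • grady f x y) - Φstar
      ≤ (1 - ηx * μ₁ / 16) * (2 * f x (ymax x) - f x y - Φstar) := by
  have hηxpos : 0 < ηx := by rw [hηx]; positivity
  -- step size numerics
  have hE4 : l ^ 2 * ηx = ηy * μ₂ ^ 2 / 64 := by rw [hηx]; field_simp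
  have hE3 : l * ηy ≤ 1 / 4 := by
    have h1 := mul_le_mul_of_nonneg_left hηy' hl.le
    calc l * ηy ≤ l * (1 / (4 * l)) := h1
      _ = 1 / 4 := by field_simp
  have hηy4l : ηy * (4 * l) ≤ 1 := (le_div_iff₀ (by positivity)).mp hηy'
  have hE2 : l ^ 2 * ηx ≤ μ₂ / 256 := by
    rw [hE4]
    have h1 := mul_le_mul_of_nonneg_right hηy4l hμ₂.le
    have h2 : 0 ≤ ηy * μ₂ * (l - μ₂) :=
      mul_nonneg (mul_nonneg hηy.le hμ₂.le) (sub_nonneg.mpr hμ₂l)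
    nlinarith
  have hE1 : l * ηx ≤ 1 / 256 := by
    have h1 : l * (l * ηx) ≤ l * (1 / 256) := by
      calc l * (l * ηx) = l ^ 2 * ηx := by ring
        _ ≤ μ₂ / 256 := hE2
        _ ≤ l / 256 := by linarith
        _ = l * (1 / 256) := by ring
    exact le_of_mul_le_mul_left h1 hl
  -- abbreviations
  obtain ⟨x', hx'⟩ : ∃ x', x' = x - ηx • gradx f x y := ⟨_, rfl⟩
  obtain ⟨y', hy'⟩ : ∃ y'_, y'_ = y + ηy • grady f x y := ⟨_, rfl⟩
  rw [← hx', ← hy']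
  have hxu : x' = x + -(ηx • gradx f x y) := by rw [hx', sub_eq_add_neg]
  have hnu : ‖-(ηx • gradx f x y)‖ = ηx * ‖gradx f x y‖ := by
    rw [norm_neg, norm_smul, Real.norm_eq_abs, abs_of_pos hηxpos]
  have hnv : ‖ηy • grady f x y‖ = ηy * ‖grady f x y‖ := by
    rw [norm_smul, Real.norm_eq_abs, abs_of_pos hηy]
  have hGx0 : (0:ℝ) ≤ ‖gradx f x y‖ := norm_nonneg _
  have hGy0 : (0:ℝ) ≤ ‖grady f x y‖ := norm_nonneg _
  -- basic order facts
  have hb : f x y ≤ f x (ymax x) := hymax x y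
  have ha : Φstar ≤ f x (ymax x) := hΦstar.1 ⟨x, rfl⟩
  have hlow : f (xmin y) y ≤ Φstar := by
    apply hΦstar.2
    rintro z ⟨x'', rfl⟩
    exact le_trans (hxmin y x'') (hymax x'' y)
  have hPLxa : 2 * μ₁ * (f x y - Φstar) ≤ ‖gradx f x y‖ ^ 2 := by
    have h1 := hPLx x y
    nlinarith [mul_nonneg hμ₁.le (sub_nonneg.mpr hlow)]
  have hPLyb : 2 * μ₂ * (f x (ymax x) - f x y) ≤ ‖grady f x y‖ ^ 2 := hPLy x y
  -- nearby maximizers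
  obtain ⟨yh, hyhmax, hyhd⟩ := aux_qg hl hμ₂ hμ₂l f hf ymax hymax hPLy x y
  have hyheq : f x yh = f x (ymax x) := le_antisymm (hymax x yh) (hyhmax (ymax x))
  obtain ⟨yh', hyh'max, hyh'd⟩ := aux_qg hl hμ₂ hμ₂l f hf ymax hymax hPLy x' yh
  have hyh'eq : f x' yh' = f x' (ymax x') := le_antisymm (hymax x' yh') (hyh'max (ymax x'))
  -- Taylor bounds
  have hA : f x' yh' ≤ f x yh' + ⟪gradx f x yh', -(ηx • gradx f x y)⟫
      + l / 2 * (ηx * ‖gradx f x y‖) ^ 2 := by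
    have h := aux_ub_x hl.le f hf x (-(ηx • gradx f x y)) yh'
    rw [← hxu, hnu] at h
    linarith [h]
  have hB : f x yh + ⟪gradx f x yh, -(ηx • gradx f x y)⟫
      - l / 2 * (ηx * ‖gradx f x y‖) ^ 2 ≤ f x' yh := by
    have h := aux_lb_x hl.le f hf x (-(ηx • gradx f x y)) yh
    rw [← hxu, hnu] at h
    linarith [h]
  have hi1 : ⟪gradx f x y, -(ηx • gradx f x y)⟫ = -(ηx * ‖gradx f x y‖ ^ 2) := by
    rw [inner_neg_right, real_inner_smul_right, real_inner_self_eq_norm_sq]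
  have hi2 : ⟪grady f x y, ηy • grady f x y⟫ = ηy * ‖grady f x y‖ ^ 2 := by
    rw [real_inner_smul_right, real_inner_self_eq_norm_sq]
  have hC : f x y - ηx * ‖gradx f x y‖ ^ 2 + ηy * ‖grady f x y‖ ^ 2
      - l / 2 * ((ηx * ‖gradx f x y‖) ^ 2 + (ηy * ‖grady f x y‖) ^ 2) ≤ f x' y' := by
    have h := aux_lb hl.le f hf x (-(ηx • gradx f x y)) y (ηy • grady f x y)
    rw [← hxu, ← hy', hnu, hnv, hi1, hi2] at h
    linarith [h]
  -- the e-bound: distance between the two maximizers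
  have hlipd : ‖gradx f x yh' - gradx f x yh‖ ≤ l * ‖yh - yh'‖ := by
    have h := aux_lipx hl.le f hf x x yh' yh
    rw [norm_sub_rev yh yh']
    simpa using h
  have hip1 : ⟪gradx f x yh' - gradx f x yh, -(ηx • gradx f x y)⟫
      ≤ l * ‖yh - yh'‖ * (ηx * ‖gradx f x y‖) := by
    calc ⟪gradx f x yh' - gradx f x yh, -(ηx • gradx f x y)⟫
        ≤ ‖gradx f x yh' - gradx f x yh‖ * ‖-(ηx • gradx f x y)‖ := real_inner_le_norm _ _
      _ = ‖gradx f x yh' - gradx f x yh‖ * (ηx * ‖gradx f x y‖) := by rw [hnu]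
      _ ≤ l * ‖yh - yh'‖ * (ηx * ‖gradx f x y‖) := by
          apply mul_le_mul_of_nonneg_right hlipd
          exact mul_nonneg hηxpos.le hGx0
  have he : f x' (ymax x') - f x' yh
      ≤ l * ‖yh - yh'‖ * (ηx * ‖gradx f x y‖) + l * (ηx * ‖gradx f x y‖) ^ 2 := by
    have h1 : f x yh' ≤ f x (ymax x) := hymax x yh'
    have h4 : ⟪gradx f x yh', -(ηx • gradx f x y)⟫ - ⟪gradx f x yh, -(ηx • gradx f x y)⟫
        = ⟪gradx f x yh' - gradx f x yh, -(ηx • gradx f x y)⟫ := by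
      rw [inner_sub_left]
    have h5 := hA
    have h6 := hB
    rw [hyh'eq] at h5
    rw [hyheq] at h6
    linarith [hip1, h4, h5, h6, h1]
  -- dd-bound: μ₂ ‖yh - yh'‖ ≤ 4 l ηx ‖gx‖
  have hu2 : (μ₂ * ‖yh - yh'‖) ^ 2
      ≤ 8 / 3 * (l * ηx * ‖gradx f x y‖) * (μ₂ * ‖yh - yh'‖)
        + 8 / 3 * (l * ηx * ‖gradx f x y‖) ^ 2 := by
    have h1 : μ₂ * ‖yh - yh'‖ ^ 2
        ≤ 8 / 3 * (l * ‖yh - yh'‖ * (ηx * ‖gradx f x y‖) + l * (ηx * ‖gradx f x y‖) ^ 2) :=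
      le_trans hyh'd (by linarith [he])
    have h2 := mul_le_mul_of_nonneg_left h1 hμ₂.le
    have h3 : μ₂ * (l * (ηx * ‖gradx f x y‖) ^ 2) ≤ l * (l * (ηx * ‖gradx f x y‖) ^ 2) :=
      mul_le_mul_of_nonneg_right hμ₂l (mul_nonneg hl.le (sq_nonneg _))
    linarith [h2, h3]
  have hd : μ₂ * ‖yh - yh'‖ ≤ 4 * (l * ηx * ‖gradx f x y‖) := by
    have h := aux_quad (mul_nonneg hμ₂.le (norm_nonneg (yh - yh')))
      (mul_nonneg (mul_nonneg hl.le hηxpos.le) hGx0) hu2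
    linarith [h]
  -- term bounds
  have hterm1 : l * ‖yh - yh'‖ * (ηx * ‖gradx f x y‖)
      ≤ 1 / 64 * (ηx * ‖gradx f x y‖ ^ 2) := by
    have hc0 : (0:ℝ) ≤ l * ηx * ‖gradx f x y‖ := mul_nonneg (mul_nonneg hl.le hηxpos.le) hGx0
    have h2 := mul_le_mul_of_nonneg_left hd hc0
    have h3 := mul_le_mul_of_nonneg_right hE2 (mul_nonneg hηxpos.le (sq_nonneg ‖gradx f x y‖))
    have h1 : μ₂ * (l * ‖yh - yh'‖ * (ηx * ‖gradx f x y‖))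
        ≤ μ₂ * (1 / 64 * (ηx * ‖gradx f x y‖ ^ 2)) := by linarith [h2, h3]

    exact le_of_mul_le_mul_left h1 hμ₂
  have hterm2 : l * ‖y - yh‖ * (ηx * ‖gradx f x y‖)
      ≤ ηx * (l ^ 2 * ‖y - yh‖ ^ 2) + 1 / 4 * (ηx * ‖gradx f x y‖ ^ 2) := by
    have h1 : l * ‖y - yh‖ * ‖gradx f x y‖
        ≤ l ^ 2 * ‖y - yh‖ ^ 2 + 1 / 4 * ‖gradx f x y‖ ^ 2 := by
      nlinarith [sq_nonneg (l * ‖y - yh‖ - 1 / 2 * ‖gradx f x y‖)]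
    have h2 := mul_le_mul_of_nonneg_left h1 hηxpos.le
    linarith [h2]

  have hterm3 : ηx * (l ^ 2 * ‖y - yh‖ ^ 2)
      ≤ ηy * μ₂ * (f x (ymax x) - f x y) / 24 := by
    have h1 := mul_le_mul_of_nonneg_left hyhd
      (mul_nonneg (sq_nonneg l) hηxpos.le)
    have h2 : l ^ 2 * ηx * (8 / 3 * (f x (ymax x) - f x y))
        = ηy * μ₂ ^ 2 / 64 * (8 / 3 * (f x (ymax x) - f x y)) := by rw [hE4]
    have h3 : μ₂ * (ηx * (l ^ 2 * ‖y - yh‖ ^ 2))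
        ≤ μ₂ * (ηy * μ₂ * (f x (ymax x) - f x y) / 24) := by linarith [h1, h2]
    exact le_of_mul_le_mul_left h3 hμ₂
  have hterm4 : l / 2 * (ηx * ‖gradx f x y‖) ^ 2
      ≤ 1 / 512 * (ηx * ‖gradx f x y‖ ^ 2) := by
    have h1 := mul_le_mul_of_nonneg_right hE1
      (mul_nonneg hηxpos.le (sq_nonneg ‖gradx f x y‖))
    linarith [h1]
  have hterm5 : l / 2 * (ηy * ‖grady f x y‖) ^ 2
      ≤ 1 / 8 * (ηy * ‖grady f x y‖ ^ 2) := by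
    have h1 := mul_le_mul_of_nonneg_right hE3
      (mul_nonneg hηy.le (sq_nonneg ‖grady f x y‖))
    linarith [h1]
  -- Φ(x') bound
  have htri : ‖yh' - y‖ ≤ ‖yh - yh'‖ + ‖y - yh‖ := by
    have h := dist_triangle y yh yh'
    rw [dist_eq_norm, dist_eq_norm, dist_eq_norm] at h
    calc ‖yh' - y‖ = ‖y - yh'‖ := norm_sub_rev _ _
      _ ≤ ‖y - yh‖ + ‖yh - yh'‖ := h
      _ = ‖yh - yh'‖ + ‖y - yh‖ := by ring
  have hlipD : ‖gradx f x yh' - gradx f x y‖ ≤ l * (‖yh - yh'‖ + ‖y - yh‖) := by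
    have h := aux_lipx hl.le f hf x x yh' y
    simp only [sub_self, norm_zero, mul_zero, zero_add] at h
    calc ‖gradx f x yh' - gradx f x y‖ ≤ l * ‖yh' - y‖ := h
      _ ≤ l * (‖yh - yh'‖ + ‖y - yh‖) := mul_le_mul_of_nonneg_left htri hl.le
  have hsplit : ⟪gradx f x yh', -(ηx • gradx f x y)⟫
      = ⟪gradx f x y, -(ηx • gradx f x y)⟫
        + ⟪gradx f x yh' - gradx f x y, -(ηx • gradx f x y)⟫ := by
    rw [inner_sub_left]; ring
  have hip2 : ⟪gradx f x yh' - gradx f x y, -(ηx • gradx f x y)⟫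
      ≤ l * (‖yh - yh'‖ + ‖y - yh‖) * (ηx * ‖gradx f x y‖) := by
    calc ⟪gradx f x yh' - gradx f x y, -(ηx • gradx f x y)⟫
        ≤ ‖gradx f x yh' - gradx f x y‖ * ‖-(ηx • gradx f x y)‖ := real_inner_le_norm _ _
      _ = ‖gradx f x yh' - gradx f x y‖ * (ηx * ‖gradx f x y‖) := by rw [hnu]
      _ ≤ l * (‖yh - yh'‖ + ‖y - yh‖) * (ηx * ‖gradx f x y‖) := by
          apply mul_le_mul_of_nonneg_right hlipD
          exact mul_nonneg hηxpos.le hGx0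
  have hD : f x' (ymax x') - f x (ymax x)
      ≤ -(375 / 512) * (ηx * ‖gradx f x y‖ ^ 2)
        + ηy * μ₂ * (f x (ymax x) - f x y) / 24 := by
    have h1 : f x yh' ≤ f x (ymax x) := hymax x yh'
    have h5 := hA
    rw [hyh'eq, hsplit, hi1] at h5
    have h6 : l * (‖yh - yh'‖ + ‖y - yh‖) * (ηx * ‖gradx f x y‖)
        = l * ‖yh - yh'‖ * (ηx * ‖gradx f x y‖)
          + l * ‖y - yh‖ * (ηx * ‖gradx f x y‖) := by ring
    linarith [h5, hip2, hterm1, hterm2, hterm3, hterm4, h6, h1]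
  -- descent-ascent bound
  have hdesc : f x y - f x' y'
      ≤ 513 / 512 * (ηx * ‖gradx f x y‖ ^ 2) - 7 / 8 * (ηy * ‖grady f x y‖ ^ 2) := by
    linarith [hC, hterm4, hterm5]
  -- PL multiplications
  have hF3 : ηx * (2 * μ₁ * (f x y - Φstar)) ≤ ηx * ‖gradx f x y‖ ^ 2 :=
    mul_le_mul_of_nonneg_left hPLxa hηxpos.le
  have hF4 : ηy * (2 * μ₂ * (f x (ymax x) - f x y)) ≤ ηy * ‖grady f x y‖ ^ 2 :=
    mul_le_mul_of_nonneg_left hPLyb hηy.le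
  have hF5 : ηx * μ₁ ≤ ηy * μ₂ / 64 := by
    have h1 : l ^ 2 * (ηx * μ₁) = ηy * μ₂ ^ 2 * μ₁ / 64 := by
      rw [hηx]; field_simp
    have h2 : ηy * μ₂ ^ 2 * μ₁ / 64 ≤ l ^ 2 * (ηy * μ₂ / 64) := by
      have h3 : μ₂ * μ₁ ≤ l * l := mul_le_mul hμ₂l hμ₁l hμ₁.le hl.le
      have h4 : (0:ℝ) ≤ ηy * μ₂ := mul_nonneg hηy.le hμ₂.le
      linarith [mul_le_mul_of_nonneg_left h3 h4]
    have h5 : l ^ 2 * (ηx * μ₁) ≤ l ^ 2 * (ηy * μ₂ / 64) := by linarith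
    exact le_of_mul_le_mul_left h5 (by positivity)
  have hG1 : 0 ≤ ηx * μ₁ * (f x (ymax x) - Φstar) :=
    mul_nonneg (mul_nonneg hηxpos.le hμ₁.le) (sub_nonneg.mpr ha)
  have hG2 : ηx * μ₁ * (f x (ymax x) - f x y)
      ≤ ηy * μ₂ / 64 * (f x (ymax x) - f x y) :=
    mul_le_mul_of_nonneg_right hF5 (sub_nonneg.mpr hb)
  have hG3 : 0 ≤ ηy * μ₂ * (f x (ymax x) - f x y) :=
    mul_nonneg (mul_nonneg hηy.le hμ₂.le) (sub_nonneg.mpr hb)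
  linarith [hD, hdesc, hF3, hF4, hG1, hG2, hG3]


end aux

/-- linear contraction of GDA under the two-sided PL condition: with
`0 < μ₁, μ₂ ≤ l`, `0 < η_y ≤ 1/(4l)`, `η_x = η_y μ₂²/(64l²)`, the Lyapunov function
`W(x,y) = 2Φ(x) − f(x,y) − Φ*` (where `Φ(x) = max_y f(x,y) = f(x, ymax x)` and
`Φ* = inf_x Φ(x)`) contracts by a factor `1 − η_x μ₁/16` per GDA step, and hence the GDA
iterates satisfy `W(x_t,y_t) ≤ (1 − η_x μ₁/16)^t W(x₀,y₀)`. -/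
theorem statement19 {d1 d2 : ℕ} (l μ₁ μ₂ ηx ηy : ℝ) (hl : 0 < l)
    (hμ₁ : 0 < μ₁) (hμ₁l : μ₁ ≤ l) (hμ₂ : 0 < μ₂) (hμ₂l : μ₂ ≤ l)
    (f : EuclideanSpace ℝ (Fin d1) → EuclideanSpace ℝ (Fin d2) → ℝ)
    (hf : IsLSmooth l f)
    -- two-sided PL condition: the extrema are attained at `xmin y` and `ymax x`, and
    -- `‖∇_x f(x,y)‖² ≥ 2μ₁(f(x,y) − min_x f(x,y))`, `‖∇_y f(x,y)‖² ≥ 2μ₂(max_y f(x,y) − f(x,y))`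
    (xmin : EuclideanSpace ℝ (Fin d2) → EuclideanSpace ℝ (Fin d1))
    (hxmin : ∀ y x, f (xmin y) y ≤ f x y)
    (ymax : EuclideanSpace ℝ (Fin d1) → EuclideanSpace ℝ (Fin d2))
    (hymax : ∀ x y, f x y ≤ f x (ymax x))
    (hPLx : ∀ x y, 2 * μ₁ * (f x y - f (xmin y) y) ≤ ‖gradx f x y‖ ^ 2)
    (hPLy : ∀ x y, 2 * μ₂ * (f x (ymax x) - f x y) ≤ ‖grady f x y‖ ^ 2)
    -- `Φ* = inf_x Φ(x) > −∞` where `Φ(x) = max_y f(x,y) = f(x, ymax x)`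
    (Φstar : ℝ) (hΦstar : IsGLB (Set.range fun x => f x (ymax x)) Φstar)
    -- step sizes
    (hηy : 0 < ηy) (hηy' : ηy ≤ 1 / (4 * l)) (hηx : ηx = ηy * μ₂ ^ 2 / (64 * l ^ 2)) :
    -- one-step contraction of `W(x,y) = 2Φ(x) − f(x,y) − Φ*`
    (∀ (x : EuclideanSpace ℝ (Fin d1)) (y : EuclideanSpace ℝ (Fin d2)),
      2 * f (x - ηx • gradx f x y) (ymax (x - ηx • gradx f x y))
          - f (x - ηx • gradx f x y) (y + ηy • grady f x y) - Φstar
        ≤ (1 - ηx * μ₁ / 16) * (2 * f x (ymax x) - f x y - Φstar)) ∧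
    -- consequently, the GDA iterates contract geometrically
    (∀ (X : ℕ → EuclideanSpace ℝ (Fin d1)) (Yt : ℕ → EuclideanSpace ℝ (Fin d2)),
      (∀ t, X (t + 1) = X t - ηx • gradx f (X t) (Yt t)) →
      (∀ t, Yt (t + 1) = Yt t + ηy • grady f (X t) (Yt t)) →
      ∀ t : ℕ,
        2 * f (X t) (ymax (X t)) - f (X t) (Yt t) - Φstar
          ≤ (1 - ηx * μ₁ / 16) ^ t * (2 * f (X 0) (ymax (X 0)) - f (X 0) (Yt 0) - Φstar)) := by
  have hone := aux_onestep hl hμ₁ hμ₁l hμ₂ hμ₂l f hf xmin hxmin ymax hymax hPLx hPLy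
    Φstar hΦstar hηy hηy' hηx
  refine ⟨hone, ?_⟩
  -- contraction factor is nonnegative
  have hρ : 0 ≤ 1 - ηx * μ₁ / 16 := by
    have e : l ^ 2 * (ηx * μ₁) = ηy * (μ₂ ^ 2 * μ₁) / 64 := by
      rw [hηx]; field_simp
    have h3 : μ₂ ^ 2 * μ₁ ≤ l ^ 2 * l := by
      have := mul_le_mul (pow_le_pow_left₀ hμ₂.le hμ₂l 2) hμ₁l hμ₁.le (sq_nonneg l)
      linarith
    have h4 := mul_le_mul_of_nonneg_left h3 hηy.le
    have e2 : ηy * (l ^ 2 * l) / 64 = l ^ 2 * (ηy * l / 64) := by ring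
    have h5 : l ^ 2 * (ηx * μ₁) ≤ l ^ 2 * (ηy * l / 64) := by
      rw [e]; rw [← e2]; linarith
    have h6 : ηx * μ₁ ≤ ηy * l / 64 := le_of_mul_le_mul_left h5 (by positivity)
    have h7 : l * ηy ≤ 1 / 4 := by
      have h1 := mul_le_mul_of_nonneg_left hηy' hl.le
      calc l * ηy ≤ l * (1 / (4 * l)) := h1
        _ = 1 / 4 := by field_simp
    nlinarith
  intro X Yt hX hY t
  induction t with
  | zero => simp
  | succ t ih =>
    have hstep := hone (X t) (Yt t)
    rw [← hX t, ← hY t] at hstep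
    calc 2 * f (X (t + 1)) (ymax (X (t + 1))) - f (X (t + 1)) (Yt (t + 1)) - Φstar
        ≤ (1 - ηx * μ₁ / 16) * (2 * f (X t) (ymax (X t)) - f (X t) (Yt t) - Φstar) := hstep
      _ ≤ (1 - ηx * μ₁ / 16) * ((1 - ηx * μ₁ / 16) ^ t
            * (2 * f (X 0) (ymax (X 0)) - f (X 0) (Yt 0) - Φstar)) :=
          mul_le_mul_of_nonneg_left ih hρ
      _ = (1 - ηx * μ₁ / 16) ^ (t + 1)
            * (2 * f (X 0) (ymax (X 0)) - f (X 0) (Yt 0) - Φstar) := by ring
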